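/- Let N be a positive integer and let d, d' be positive divisors of N. Let x, x' be integers with gcd(x, d) = 1 and gcd(x', d') = 1. Suppose there exist integers r, u, v, w with r*w - N*v*u = 1 such that r*x + u*d = x' and N*v*x + w*d = d'. Then d = d' and x is congruent to x' modulo gcd(d, N/d). -/
import Mathlib


/-- Theorem 2.2 (one direction): if an element of `Γ₀(N)` maps `(x, d)` to `(x', d')`
with `d, d'` positive divisors of `N`, `gcd(x, d) = 1` and `gcd(x', d') = 1`, then
`d = d'` and `x ≡ x' (mod gcd(d, N/d))`. -/
theorem cusp_equiv_level_and_mod (N : ℕ) (hN : 0 < N) (d d' : ℕ)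
    (hd : d ∣ N) (hd' : d' ∣ N) (x x' : ℤ)
    (hx : Int.gcd x (d : ℤ) = 1) (hx' : Int.gcd x' (d' : ℤ) = 1)
    (r u v w : ℤ) (hdet : r * w - (N : ℤ) * v * u = 1)
    (h1 : r * x + u * (d : ℤ) = x') (h2 : (N : ℤ) * v * x + w * (d : ℤ) = (d' : ℤ)) :
    d = d' ∧ Int.ModEq ((Nat.gcd d (N / d) : ℤ)) x x' := by
  have hd0 : 0 < d := Nat.pos_of_dvd_of_pos hd hN
  set m : ℕ := N / d with hmdef
  have hdm : (N : ℤ) = (d : ℤ) * (m : ℤ) := by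
    exact_mod_cast (Nat.mul_div_cancel' hd).symm
  -- d ∣ d'
  have hdd' : (d : ℤ) ∣ (d' : ℤ) := ⟨(m : ℤ) * v * x + w, by linear_combination -h2 + v * x * hdm⟩
  -- d' ∣ d
  obtain ⟨c, hc⟩ : (d' : ℤ) ∣ (N : ℤ) := Int.natCast_dvd_natCast.mpr hd'
  have hd'd : (d' : ℤ) ∣ (d : ℤ) :=
    ⟨r - c * v * x', by linear_combination r * h2 - (N : ℤ) * v * h1 - (d : ℤ) * hdet - v * x' * hc⟩
  have hdeq : d = d' :=
    Nat.dvd_antisymm (Int.natCast_dvd_natCast.mp hdd') (Int.natCast_dvd_natCast.mp hd'd)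
  refine ⟨hdeq, ?_⟩
  -- from h2 with d = d': m*v*x + w = 1
  have h2' : (m : ℤ) * v * x + w = 1 := by
    have hd0' : (d : ℤ) ≠ 0 := by exact_mod_cast hd0.ne'
    have : (d : ℤ) * ((m : ℤ) * v * x + w) = (d : ℤ) * 1 := by
      rw [← hdeq] at h2
      linear_combination h2 - v * x * hdm
    exact mul_left_cancel₀ hd0' this
  -- m ∣ r - 1
  have hm_dvd : (m : ℤ) ∣ r - 1 :=
    ⟨r * v * x + d * v * u, by linear_combination hdet - r * h2' + v * u * hdm⟩
  have hg : ((Nat.gcd d m : ℕ) : ℤ) ∣ x' - x := by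
    have hgd : ((Nat.gcd d m : ℕ) : ℤ) ∣ (d : ℤ) := Int.natCast_dvd_natCast.mpr (Nat.gcd_dvd_left d m)
    have hgm : ((Nat.gcd d m : ℕ) : ℤ) ∣ (m : ℤ) := Int.natCast_dvd_natCast.mpr (Nat.gcd_dvd_right d m)
    have : x' - x = (r - 1) * x + u * d := by linear_combination -h1
    rw [this]
    exact dvd_add (Dvd.dvd.mul_right (hgm.trans hm_dvd) x) (Dvd.dvd.mul_left hgd u)
  exact (Int.modEq_iff_dvd.mpr hg)
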